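/- The subspaces {W_H ⊗ (1_Q 1_Q^⊤) : W_H H-equivariant} and {I_P ⊗ W_K : W_K K-equivariant} of ℝ^{PQ×PQ} intersect exactly in the one-dimensional span of I_P ⊗ (1_Q 1_Q^⊤), assuming the spaces of H- and K-equivariant maps both contain the identity and the all-ones matrix (which holds when the actions are transitive permutation actions). -/
import Mathlib


open Matrix Kronecker

/-- Permutation matrix of a permutation `σ`: entry `(i,j)` is 1 iff `σ j = i`. -/
noncomputable def permMat {n : Type*} [Fintype n] [DecidableEq n] (σ : Equiv.Perm n) :
    Matrix n n ℝ := Matrix.of fun i j => if σ j = i then (1 : ℝ) else 0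

lemma permMat_mul_allOnes {n : Type*} [Fintype n] [DecidableEq n] (σ : Equiv.Perm n) :
    permMat σ * vecMulVec (fun _ : n => (1 : ℝ)) (fun _ : n => (1 : ℝ)) =
      vecMulVec (fun _ : n => (1 : ℝ)) (fun _ : n => (1 : ℝ)) * permMat σ := by
  ext i j
  simp only [Matrix.mul_apply, permMat, vecMulVec_apply, Matrix.of_apply, one_mul, mul_one,
    ite_mul, one_mul, zero_mul, mul_ite, mul_one, mul_zero]
  rw [Finset.sum_ite_eq Finset.univ (σ j) (fun _ => (1:ℝ))]
  simp only [Equiv.apply_eq_iff_eq_symm_apply]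
  rw [Finset.sum_ite_eq' Finset.univ (σ.symm i) (fun _ => (1:ℝ))]
  simp

/-- The subspaces `{W_H ⊗ (1_Q 1_Q^⊤) : W_H H-equivariant}` and `{I_P ⊗ W_K : W_K K-equivariant}`
of `ℝ^{PQ×PQ}` intersect exactly in the one-dimensional span of `I_P ⊗ (1_Q 1_Q^⊤)`.
(The identity is always `H`-equivariant and the all-ones matrix is always `K`-equivariant for
permutation actions.) -/
theorem outer_inner_intersection
    {H P K Q : Type*} [Group H] [Group K]
    [Fintype P] [DecidableEq P] [Nonempty P] [Fintype Q] [DecidableEq Q] [Nonempty Q]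
    (ρ : H →* Equiv.Perm P) (τ : K →* Equiv.Perm Q) :
    {M : Matrix (P × Q) (P × Q) ℝ |
        ∃ WH : Matrix P P ℝ, (∀ h : H, permMat (ρ h) * WH = WH * permMat (ρ h)) ∧
          M = WH ⊗ₖ vecMulVec (fun _ : Q => (1 : ℝ)) (fun _ : Q => (1 : ℝ))} ∩
      {M : Matrix (P × Q) (P × Q) ℝ |
        ∃ WK : Matrix Q Q ℝ, (∀ k : K, permMat (τ k) * WK = WK * permMat (τ k)) ∧
          M = (1 : Matrix P P ℝ) ⊗ₖ WK} =
    {M : Matrix (P × Q) (P × Q) ℝ |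
        ∃ c : ℝ, M = c • ((1 : Matrix P P ℝ) ⊗ₖ
          vecMulVec (fun _ : Q => (1 : ℝ)) (fun _ : Q => (1 : ℝ)))} := by
  ext M
  constructor
  · rintro ⟨⟨WH, -, rfl⟩, ⟨WK, -, hM⟩⟩
    obtain ⟨p0⟩ := (inferInstance : Nonempty P)
    obtain ⟨q0⟩ := (inferInstance : Nonempty Q)
    refine ⟨WH p0 p0, ?_⟩
    have key : ∀ p p' q q', WH p p' * 1 = (1 : Matrix P P ℝ) p p' * WK q q' := by
      intro p p' q q'
      have := congrFun (congrFun hM (p, q)) (p', q')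
      simpa [Matrix.kroneckerMap_apply, vecMulVec_apply] using this
    ext ⟨p, q⟩ ⟨p', q'⟩
    simp only [Matrix.kroneckerMap_apply, vecMulVec_apply, Matrix.smul_apply, smul_eq_mul,
      mul_one]
    have h1 := key p p' q0 q0
    have h2 := key p0 p0 q0 q0
    rw [mul_one] at h1 h2
    rw [Matrix.one_apply_eq, one_mul] at h2
    rw [h1, ← h2]
    ring
  · rintro ⟨c, rfl⟩
    constructor
    · refine ⟨c • (1 : Matrix P P ℝ), fun h => by
        simp [Matrix.mul_smul, Matrix.smul_mul], ?_⟩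
      rw [Matrix.smul_kronecker]
    · refine ⟨c • vecMulVec (fun _ : Q => (1 : ℝ)) (fun _ : Q => (1 : ℝ)), fun k => ?_, ?_⟩
      · rw [Matrix.mul_smul, Matrix.smul_mul, permMat_mul_allOnes]
      · rw [Matrix.kronecker_smul]
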